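/- Let X be a real Banach space and let M ⊆ X be a closed reflexive subspace, and let π : X → X/M be the quotient map. If {y_i : i ∈ I} is a family of unit vectors in X/M with ‖y_i − y_j‖ > 1 for all distinct i, j ∈ I, then there exists a family {x_i : i ∈ I} of unit vectors in X with π(x_i) = y_i and ‖x_i − x_j‖ > 1 for all distinct i, j ∈ I. In particular, if the unit sphere of X/M contains a (1+)-separated subset of cardinality κ, then so does the unit sphere of X. -/

import Mathlib

open NormedSpace WeakDual Metric

/-- A real normed space is reflexive if the canonical embedding into its
bidual is surjective. -/
def IsReflexiveSpace (M : Type*) [NormedAddCommGroup M] [NormedSpace ℝ M] : Prop :=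
  Function.Surjective (NormedSpace.inclusionInDoubleDual ℝ M)

/-- A reflexive subspace is proximinal: for every `z` there is `m₀ ∈ M` with
`‖z - m₀‖ ≤ ‖mkQ z‖`. -/
lemma exists_nearest_of_reflexive
    {X : Type*} [NormedAddCommGroup X] [NormedSpace ℝ X]
    (M : Submodule ℝ X) [IsClosed (M : Set X)]
    (hrefl : IsReflexiveSpace M) (z : X) :
    ∃ m₀ : M, ‖z - (m₀ : X)‖ ≤ ‖M.mkQ z‖ := by
  set d : ℝ := ‖M.mkQ z‖ with hd
  have hd0 : 0 ≤ d := norm_nonneg _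
  -- near-minimizers
  have hmin : ∀ n : ℕ, ∃ μ : M, ‖z - (μ : X)‖ < d + 1 / (n + 1) := by
    intro n
    have hε : (0 : ℝ) < 1 / (n + 1) := by positivity
    obtain ⟨w, hw, hwn⟩ := Submodule.Quotient.norm_mk_lt (M.mkQ z) hε
    have hmem : z - w ∈ M := by
      rw [show M.mkQ z = Submodule.Quotient.mk z from rfl, Submodule.Quotient.eq] at hw
      simpa using M.neg_mem hw
    refine ⟨⟨z - w, hmem⟩, ?_⟩
    simpa [hd] using hwn
  choose μ hμ using hmin
  set R : ℝ := ‖z‖ + d + 1 with hR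
  set J := NormedSpace.inclusionInDoubleDual ℝ M with hJ
  let iN : NormedAddCommGroup (StrongDual ℝ M) := inferInstance
  let iNS : NormedSpace ℝ (StrongDual ℝ M) := inferInstance
  -- the sets C n in the weak* topology on M**
  set C : ℕ → Set (WeakDual ℝ (StrongDual ℝ M)) := fun n =>
    (WeakDual.toStrongDual ⁻¹' closedBall 0 R) ∩
      ⋂ f : {f : StrongDual ℝ X // ‖f‖ ≤ 1},
        (fun Φ : WeakDual ℝ (StrongDual ℝ M) => Φ ((f : StrongDual ℝ X).comp M.subtypeL)) ⁻¹'
          Set.Ici ((f : StrongDual ℝ X) z - (d + 1 / (n + 1))) with hC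
  have hclosed : ∀ n, IsClosed (C n) := by
    intro n
    refine IsClosed.inter (WeakDual.isClosed_closedBall 0 R) (isClosed_iInter fun f => ?_)
    exact IsClosed.preimage (WeakDual.eval_continuous _) isClosed_Ici
  have hcompact : IsCompact (C 0) :=
    (WeakDual.isCompact_closedBall (𝕜 := ℝ) (E := StrongDual ℝ M) 0 R).inter_right
      (isClosed_iInter fun f => IsClosed.preimage (WeakDual.eval_continuous _) isClosed_Ici)
  have hnonempty : ∀ n, (C n).Nonempty := by
    intro n
    refine ⟨StrongDual.toWeakDual (J (μ n)), ?_, ?_⟩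
    · simp only [Set.mem_preimage, mem_closedBall_zero_iff]
      have h1 : ‖J (μ n)‖ ≤ ‖μ n‖ := by
        calc ‖J (μ n)‖ ≤ ‖J‖ * ‖μ n‖ := (J.le_opNorm _)
          _ ≤ 1 * ‖μ n‖ :=
            mul_le_mul_of_nonneg_right (NormedSpace.inclusionInDoubleDual_norm_le ℝ M)
              (norm_nonneg _)
          _ = ‖μ n‖ := one_mul _
      have h2 : ‖(μ n : X)‖ ≤ ‖z‖ + ‖z - (μ n : X)‖ := by
        have := norm_sub_le z (z - (μ n : X))
        simpa [sub_sub_cancel] using this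
      have h3 : ‖z - (μ n : X)‖ < d + 1 := by
        have h5 := hμ n
        have h4 : (1 : ℝ) / (n + 1) ≤ 1 := by
          rw [div_le_one (by positivity)]; linarith [Nat.cast_nonneg (α := ℝ) n]
        linarith
      have hcoe : ‖μ n‖ = ‖(μ n : X)‖ := rfl
      calc ‖WeakDual.toStrongDual (StrongDual.toWeakDual (J (μ n)))‖ = ‖J (μ n)‖ := rfl
        _ ≤ ‖(μ n : X)‖ := hcoe ▸ h1
        _ ≤ R := by rw [hR]; linarith
    · refine Set.mem_iInter.2 fun f => ?_
      simp only [Set.mem_preimage, Set.mem_Ici]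
      have heval : (StrongDual.toWeakDual (J (μ n)))
          ((f : StrongDual ℝ X).comp M.subtypeL) = (f : StrongDual ℝ X) (μ n : X) := rfl
      rw [heval]
      have hsub : (f : StrongDual ℝ X) z - (f : StrongDual ℝ X) (μ n : X)
          = (f : StrongDual ℝ X) (z - (μ n : X)) := by rw [map_sub]
      have hb : (f : StrongDual ℝ X) (z - (μ n : X)) ≤ d + 1 / (n + 1) := by
        calc (f : StrongDual ℝ X) (z - (μ n : X)) ≤ ‖(f : StrongDual ℝ X) (z - (μ n : X))‖ :=
              le_abs_self _
          _ ≤ ‖(f : StrongDual ℝ X)‖ * ‖z - (μ n : X)‖ := ContinuousLinearMap.le_opNorm _ _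
          _ ≤ 1 * ‖z - (μ n : X)‖ := mul_le_mul_of_nonneg_right f.2 (norm_nonneg _)
          _ = ‖z - (μ n : X)‖ := one_mul _
          _ ≤ d + 1 / (n + 1) := (hμ n).le
      linarith [hsub ▸ hb]
  have hdec : ∀ n, C (n + 1) ⊆ C n := by
    intro n Φ hΦ
    refine ⟨hΦ.1, Set.mem_iInter.2 fun f => ?_⟩
    have hf := Set.mem_iInter.1 hΦ.2 f
    simp only [Set.mem_preimage, Set.mem_Ici] at hf ⊢
    have hle : (1 : ℝ) / (↑n + 1 + 1) ≤ 1 / (↑n + 1) := by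
      apply div_le_div_of_nonneg_left one_pos.le (by positivity)
      linarith
    calc (f : StrongDual ℝ X) z - (d + 1 / (↑n + 1))
        ≤ (f : StrongDual ℝ X) z - (d + 1 / (↑(n + 1) + 1)) := by push_cast; linarith
      _ ≤ _ := hf
  obtain ⟨Φ₀, hΦ₀⟩ := IsCompact.nonempty_iInter_of_sequence_nonempty_isCompact_isClosed
    C hdec hnonempty hcompact hclosed
  obtain ⟨m₀, hm₀⟩ := hrefl (WeakDual.toStrongDual Φ₀)
  refine ⟨m₀, ?_⟩
  have key : ∀ f : StrongDual ℝ X, ‖f‖ ≤ 1 → f (z - (m₀ : X)) ≤ d := by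
    intro f hf
    refine le_of_forall_pos_le_add fun ε hε => ?_
    obtain ⟨n, hn⟩ := exists_nat_one_div_lt hε
    have hCn : Φ₀ ∈ C n := Set.mem_iInter.1 hΦ₀ n
    have hfn := Set.mem_iInter.1 hCn.2 ⟨f, hf⟩
    simp only [Set.mem_preimage, Set.mem_Ici] at hfn
    have heval : Φ₀ (f.comp M.subtypeL) = f (m₀ : X) := by
      have h1 : J m₀ (f.comp M.subtypeL) = f (m₀ : X) := rfl
      have h2 : WeakDual.toStrongDual Φ₀ (f.comp M.subtypeL) = Φ₀ (f.comp M.subtypeL) := rfl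
      rw [← h2, ← hm₀, h1]
    rw [heval] at hfn
    rw [map_sub]
    linarith
  by_cases hz : z - (m₀ : X) = 0
  · rw [hz, norm_zero]; exact hd0
  · obtain ⟨g, hg1, hg2⟩ := exists_dual_vector ℝ (z - (m₀ : X)) (norm_ne_zero_iff.mpr hz)
    have hk := key g hg1.le
    rw [hg2] at hk
    exact_mod_cast hk

/-- Let `X` be a real Banach space, `M ⊆ X` a closed reflexive subspace, and
`π : X → X/M` the quotient map.  Any (1+)-separated family of unit vectors in
`X/M` lifts to a (1+)-separated family of unit vectors in `X` (along `π`),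
indexed by the same set. -/
theorem separated_family_lifts_through_quotient_by_reflexive
    (X : Type*) [NormedAddCommGroup X] [NormedSpace ℝ X] [CompleteSpace X]
    (M : Submodule ℝ X) [IsClosed (M : Set X)]
    (hrefl : IsReflexiveSpace M)
    (I : Type*) (y : I → X ⧸ M)
    (hy : ∀ i, ‖y i‖ = 1)
    (hsep : ∀ i j : I, i ≠ j → 1 < ‖y i - y j‖) :
    ∃ x : I → X, (∀ i, ‖x i‖ = 1 ∧ M.mkQ (x i) = y i) ∧
      ∀ i j : I, i ≠ j → 1 < ‖x i - x j‖ := by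
  have lift : ∀ i, ∃ x : X, ‖x‖ = 1 ∧ M.mkQ x = y i := by
    intro i
    obtain ⟨z, hz⟩ := Submodule.mkQ_surjective M (y i)
    obtain ⟨m₀, hm₀⟩ := exists_nearest_of_reflexive M hrefl z
    have hmk : M.mkQ (z - (m₀ : X)) = y i := by
      rw [map_sub, hz]
      have : M.mkQ (m₀ : X) = 0 := (Submodule.Quotient.mk_eq_zero M).2 m₀.2
      rw [this, sub_zero]
    refine ⟨z - (m₀ : X), le_antisymm ?_ ?_, hmk⟩
    · rw [hz] at hm₀; rw [hy i] at hm₀; exact hm₀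
    · calc (1 : ℝ) = ‖y i‖ := (hy i).symm
        _ = ‖M.mkQ (z - (m₀ : X))‖ := by rw [hmk]
        _ ≤ ‖z - (m₀ : X)‖ := Submodule.Quotient.norm_mk_le M _
  choose x hx1 hx2 using lift
  refine ⟨x, fun i => ⟨hx1 i, hx2 i⟩, fun i j hij => ?_⟩
  calc (1 : ℝ) < ‖y i - y j‖ := hsep i j hij
    _ = ‖M.mkQ (x i - x j)‖ := by rw [map_sub, hx2 i, hx2 j]
    _ ≤ ‖x i - x j‖ := Submodule.Quotient.norm_mk_le M _
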